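/- For nonnegative integers k <= n and positive integer m: sum_{i=k}^n [i choose k]_q * q^i/(1-q^i) * sum over chains i <= i_2 <= ... <= i_m <= n of q^{i_2+...+i_m}/((1-q^{i_2})...(1-q^{i_m})) = [n choose k]_q * q^{km}/(1-q^k)^m. -/
import Mathlib


open Finset

variable {F : Type*} [Field F]

/-- `(q;q)_n = (1-q)(1-q^2)...(1-q^n)` -/
def qfac (q : F) (n : ℕ) : F := ∏ j ∈ Finset.range n, (1 - q ^ (j + 1))

/-- `(z;q)_k = (1-z)(1-zq)...(1-zq^{k-1})` -/
def qpoch (z q : F) (k : ℕ) : F := ∏ j ∈ Finset.range k, (1 - z * q ^ j)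

/-- Gaussian binomial coefficient `[n choose k]_q` -/
def qbinom (q : F) (n k : ℕ) : F := qfac q n / (qfac q k * qfac q (n - k))

/-- Sum over weakly increasing `m`-tuples `lo ≤ i_1 ≤ ... ≤ i_m ≤ n` of
`∏_j q^{i_j}/(1-q^{i_j})` (equal to `1` when `m = 0`). -/
def chainSum (q : F) (lo n m : ℕ) : F :=
  ∑ c ∈ Finset.univ.filter (fun c : Fin m → Fin (n + 1) =>
      (∀ j k : Fin m, j ≤ k → c j ≤ c k) ∧ ∀ j, lo ≤ (c j : ℕ)),
    ∏ j, q ^ (c j : ℕ) / (1 - q ^ (c j : ℕ))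

/-- Complete homogeneous symmetric function `h_m` of the variables
`x lo, x (lo+1), ..., x n`. -/
def hSum {R : Type*} [CommRing R] (x : ℕ → R) (lo n m : ℕ) : R :=
  ∑ c ∈ Finset.univ.filter (fun c : Fin m → Fin (n + 1) =>
      (∀ j k : Fin m, j ≤ k → c j ≤ c k) ∧ ∀ j, lo ≤ (c j : ℕ)),
    ∏ j, x (c j : ℕ)

lemma chainSum_zero' (q : F) (lo n : ℕ) : chainSum q lo n 0 = 1 := by
  unfold chainSum
  rw [Finset.filter_true_of_mem (fun c _ => ⟨fun j => j.elim0, fun j => j.elim0⟩)]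
  simp

lemma chainSum_succ' (q : F) (lo n m : ℕ) :
    chainSum q lo n (m + 1)
      = ∑ j ∈ Finset.Icc lo n, (q ^ j / (1 - q ^ j)) * chainSum q j n m := by
  unfold chainSum
  simp_rw [Finset.mul_sum]
  rw [Finset.sum_sigma']
  refine Finset.sum_bij' (fun c _ => (⟨(c 0 : ℕ), fun t => c t.succ⟩ :
      Σ j : ℕ, Fin m → Fin (n + 1)))
    (fun p hp => Fin.cons ⟨p.1, by
      have := (Finset.mem_Icc.mp (Finset.mem_sigma.mp hp).1).2; omega⟩ p.2)
    ?_ ?_ ?_ ?_ ?_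
  · intro c hc
    simp only [Finset.mem_filter, Finset.mem_univ, true_and] at hc
    obtain ⟨hmono, hlo⟩ := hc
    refine Finset.mem_sigma.mpr ⟨Finset.mem_Icc.mpr ⟨hlo 0, (c 0).is_le⟩, ?_⟩
    simp only [Finset.mem_filter, Finset.mem_univ, true_and]
    refine ⟨fun j k hjk => hmono j.succ k.succ (by simpa using hjk), fun t => ?_⟩
    exact hmono 0 t.succ (Fin.zero_le _)
  · intro p hp
    rw [Finset.mem_sigma] at hp
    obtain ⟨hp1, hp2⟩ := hp
    rw [Finset.mem_Icc] at hp1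
    simp only [Finset.mem_filter, Finset.mem_univ, true_and] at hp2 ⊢
    obtain ⟨hmono, hge⟩ := hp2
    constructor
    · intro a b hab
      revert hab
      refine Fin.cases ?_ (fun t => ?_) b <;> refine Fin.cases ?_ (fun s => ?_) a
      · intro _; exact le_refl _
      · intro h; exact absurd h (by simp [Fin.le_def])
      · intro _
        simp only [Fin.cons_zero, Fin.cons_succ, Fin.le_def]
        exact hge t
      · intro h
        simp only [Fin.cons_succ]
        exact hmono s t (Fin.succ_le_succ_iff.mp h)
    · intro t
      refine Fin.cases ?_ (fun s => ?_) t
      · simpa using hp1.1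
      · simp only [Fin.cons_succ]
        exact le_trans hp1.1 (hge s)
  · intro c hc
    exact Fin.cons_self_tail c
  · intro p hp
    simp
  · intro c hc
    rw [Fin.prod_univ_succ]

lemma one_sub_pow_ne' (q : F) (hq : ∀ i : ℕ, 1 ≤ i → q ^ i ≠ 1) {i : ℕ} (hi : 1 ≤ i) :
    (1 : F) - q ^ i ≠ 0 := sub_ne_zero.mpr (Ne.symm (hq i hi))

lemma qbinom_succ' (q : F) {k n : ℕ} (hkn : k ≤ n) :
    qbinom q (n + 1) k = qbinom q n k * ((1 - q ^ (n + 1)) / (1 - q ^ (n + 1 - k))) := by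
  have h2 : n + 1 - k = (n - k) + 1 := by omega
  unfold qbinom qfac
  rw [h2, Finset.prod_range_succ, Finset.prod_range_succ, div_mul_div_comm]
  ring

lemma base_sum' (q : F) (hq : ∀ i : ℕ, 1 ≤ i → q ^ i ≠ 1) (k : ℕ) (hk : 1 ≤ k) :
    ∀ n, k ≤ n → ∑ i ∈ Finset.Icc k n, qbinom q i k * (q ^ i / (1 - q ^ i))
      = qbinom q n k * (q ^ k / (1 - q ^ k)) := by
  intro n hn
  induction n, hn using Nat.le_induction with
  | base => rw [Finset.Icc_self, Finset.sum_singleton]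
  | succ n hn ih =>
    rw [Finset.sum_Icc_succ_top (by omega), ih, qbinom_succ' q hn]
    have h1 : (1 : F) - q ^ k ≠ 0 := one_sub_pow_ne' q hq hk
    have h3 : (1 : F) - q ^ (n + 1 - k) ≠ 0 := one_sub_pow_ne' q hq (by omega)
    have hpow : q ^ (n + 1) = q ^ k * q ^ (n + 1 - k) := by
      rw [← pow_add]; congr 1; omega
    have h2 : (1 : F) - q ^ k * q ^ (n + 1 - k) ≠ 0 := by
      rw [← hpow]; exact one_sub_pow_ne' q hq (by omega)
    rw [hpow]
    field_simp
    ring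

theorem fu_lascoux_lemma2_eq8 (q : F) (k n m : ℕ) (hk : 1 ≤ k) (hkn : k ≤ n)
    (hm : 1 ≤ m) (hq : ∀ i : ℕ, 1 ≤ i → q ^ i ≠ 1) :
    ∑ i ∈ Finset.Icc k n, qbinom q i k * (q ^ i / (1 - q ^ i)) * chainSum q i n (m - 1)
      = qbinom q n k * q ^ (k * m) / (1 - q ^ k) ^ m := by
  obtain ⟨m', rfl⟩ : ∃ m', m = m' + 1 := ⟨m - 1, by omega⟩
  rw [Nat.add_sub_cancel]
  clear hm
  induction m' with
  | zero =>
    simp only [chainSum_zero', mul_one]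
    rw [base_sum' q hq k hk n hkn, show k * (0 + 1) = k from by ring, pow_one, mul_div_assoc]
  | succ m' ih =>
    simp only [chainSum_succ']
    calc ∑ i ∈ Finset.Icc k n, qbinom q i k * (q ^ i / (1 - q ^ i)) *
            ∑ j ∈ Finset.Icc i n, q ^ j / (1 - q ^ j) * chainSum q j n m'
        = ∑ i ∈ Finset.Icc k n, ∑ j ∈ Finset.Icc i n,
            qbinom q i k * (q ^ i / (1 - q ^ i)) *
              (q ^ j / (1 - q ^ j) * chainSum q j n m') := by
          simp_rw [Finset.mul_sum]
      _ = ∑ j ∈ Finset.Icc k n, ∑ i ∈ Finset.Icc k j,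
            qbinom q i k * (q ^ i / (1 - q ^ i)) *
              (q ^ j / (1 - q ^ j) * chainSum q j n m') := by
          refine Finset.sum_comm' ?_
          intro i j
          simp only [Finset.mem_Icc]
          omega
      _ = ∑ j ∈ Finset.Icc k n, qbinom q j k * (q ^ k / (1 - q ^ k)) *
            (q ^ j / (1 - q ^ j) * chainSum q j n m') := by
          refine Finset.sum_congr rfl fun j hj => ?_
          rw [← Finset.sum_mul, base_sum' q hq k hk j (Finset.mem_Icc.mp hj).1]
      _ = (q ^ k / (1 - q ^ k)) * ∑ j ∈ Finset.Icc k n,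
            qbinom q j k * (q ^ j / (1 - q ^ j)) * chainSum q j n m' := by
          rw [Finset.mul_sum]; refine Finset.sum_congr rfl fun j hj => ?_; ring
      _ = qbinom q n k * q ^ (k * (m' + 1 + 1)) / (1 - q ^ k) ^ (m' + 1 + 1) := by
          rw [ih]
          have h1 : (1 : F) - q ^ k ≠ 0 := one_sub_pow_ne' q hq hk
          field_simp
          ring_nf
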